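/- Let G be a graph without isolated vertices, let weights satisfy 0 < w_v and 2·w_v ≤ w_e, and let α ≥ 1. If D is a mixed dominating set of G with w(D) ≤ α·w(S_wmd), where S_wmd is a minimum-weight mixed dominating set of G, then V(D) is a vertex cover of G with |V(D)| ≤ α·τ(G). -/

import Mathlib

/-- Mixed dominating set, see paper. -/
def IsMixedDomSet {V : Type*} (G : SimpleGraph V) (VD : Finset V) (ED : Finset (Sym2 V)) :
    Prop :=
  (∀ e ∈ ED, e ∈ G.edgeSet) ∧
  (∀ v : V, v ∉ VD → (∃ e ∈ ED, v ∈ e) ∨ ∃ u ∈ VD, G.Adj v u) ∧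
  (∀ e ∈ G.edgeSet, e ∉ ED → ∃ v ∈ e, v ∈ VD ∨ ∃ f ∈ ED, v ∈ f)

/-- A vertex cover contains at least one endpoint of every edge. -/
def IsVertexCover {V : Type*} (G : SimpleGraph V) (C : Finset V) : Prop :=
  ∀ ⦃u w : V⦄, G.Adj u w → u ∈ C ∨ w ∈ C

/-- Endpoints of a `Sym2` as a finset. -/
def epts {V : Type*} [DecidableEq V] : Sym2 V → Finset V :=
  Sym2.lift ⟨fun a b => {a, b}, fun a b => Finset.pair_comm a b⟩

lemma mem_epts {V : Type*} [DecidableEq V] (v : V) (e : Sym2 V) : v ∈ epts e ↔ v ∈ e := by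
  induction e using Sym2.ind with
  | _ a b => simp [epts, Sym2.mem_iff]

lemma card_epts_le {V : Type*} [DecidableEq V] (e : Sym2 V) : (epts e).card ≤ 2 := by
  induction e using Sym2.ind with
  | _ a b =>
    show ({a, b} : Finset V).card ≤ 2
    exact (Finset.card_insert_le _ _).trans (by simp)

/-- Let `G` have no isolated vertices, `0 < w_v`, `2 w_v ≤ w_e`, `α ≥ 1`. If `D = (VD, ED)`
is a mixed dominating set with `w(D) ≤ α * w(S_wmd)` for a minimum-weight mixed dominating
set `S_wmd`, then `V(D)` is a vertex cover of size at most `α * τ(G)`. -/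
theorem approx_mixedDomSet_gives_approx_vertexCover {V : Type*} (G : SimpleGraph V)
    (hiso : ∀ v : V, ∃ u : V, G.Adj v u)
    (wv we : ℝ) (hwv : 0 < wv) (hwe : 2 * wv ≤ we)
    (α : ℝ) (hα : 1 ≤ α)
    (SVD : Finset V) (SED : Finset (Sym2 V)) (hS : IsMixedDomSet G SVD SED)
    (hSmin : ∀ (VD : Finset V) (ED : Finset (Sym2 V)), IsMixedDomSet G VD ED →
      wv * SVD.card + we * SED.card ≤ wv * VD.card + we * ED.card)
    (VD : Finset V) (ED : Finset (Sym2 V)) (hD : IsMixedDomSet G VD ED)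
    (hDapx : wv * VD.card + we * ED.card ≤ α * (wv * SVD.card + we * SED.card))
    (VofD : Finset V) (hVofD : ∀ v : V, v ∈ VofD ↔ v ∈ VD ∨ ∃ e ∈ ED, v ∈ e)
    (τ : ℕ) (hτ : ∃ C₀ : Finset V, IsVertexCover G C₀ ∧ C₀.card = τ)
    (hτmin : ∀ C₀ : Finset V, IsVertexCover G C₀ → τ ≤ C₀.card) :
    IsVertexCover G VofD ∧ (VofD.card : ℝ) ≤ α * τ := by
  classical
  have hvc : IsVertexCover G VofD := by
    intro u w huw
    by_cases h : s(u, w) ∈ ED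
    · exact Or.inl ((hVofD u).2 (Or.inr ⟨_, h, Sym2.mem_mk_left u w⟩))
    · obtain ⟨v, hv, hv2⟩ := hD.2.2 _ huw h
      have hvin : v ∈ VofD := (hVofD v).2 (by tauto)
      rcases Sym2.mem_iff.mp hv with rfl | rfl
      · exact Or.inl hvin
      · exact Or.inr hvin
  refine ⟨hvc, ?_⟩
  have hsub : VofD ⊆ VD ∪ ED.biUnion epts := by
    intro v hv
    rcases (hVofD v).1 hv with h | ⟨e, he, hve⟩
    · exact Finset.mem_union_left _ h
    · exact Finset.mem_union_right _ (Finset.mem_biUnion.mpr ⟨e, he, (mem_epts v e).mpr hve⟩)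
  have hcard : VofD.card ≤ VD.card + 2 * ED.card := by
    calc VofD.card ≤ (VD ∪ ED.biUnion epts).card := Finset.card_le_card hsub
      _ ≤ VD.card + (ED.biUnion epts).card := Finset.card_union_le _ _
      _ ≤ VD.card + ∑ e ∈ ED, (epts e).card := by gcongr; exact Finset.card_biUnion_le
      _ ≤ VD.card + ∑ _e ∈ ED, 2 := by gcongr with e he; exact card_epts_le e
      _ = VD.card + 2 * ED.card := by rw [Finset.sum_const, smul_eq_mul, mul_comm]
  obtain ⟨C, hC, hCcard⟩ := hτ
  have hCmds : IsMixedDomSet G C ∅ := by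
    refine ⟨by simp, ?_, ?_⟩
    · intro v hv
      obtain ⟨u, hu⟩ := hiso v
      rcases hC hu with h | h
      · exact absurd h hv
      · exact Or.inr ⟨u, h, hu⟩
    · intro e he _
      induction e using Sym2.ind with
      | _ a b =>
        rcases hC ((SimpleGraph.mem_edgeSet G).mp he) with h | h
        · exact ⟨a, Sym2.mem_mk_left a b, Or.inl h⟩
        · exact ⟨b, Sym2.mem_mk_right a b, Or.inl h⟩
  have hSτ : wv * SVD.card + we * SED.card ≤ wv * τ := by
    have := hSmin C ∅ hCmds
    simpa [hCcard] using this
  have h1 : wv * VofD.card ≤ wv * VD.card + we * ED.card := by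
    have h2 : wv * (VofD.card : ℝ) ≤ wv * ((VD.card : ℝ) + 2 * ED.card) := by
      apply mul_le_mul_of_nonneg_left _ hwv.le
      exact_mod_cast hcard
    calc wv * (VofD.card : ℝ) ≤ wv * ((VD.card : ℝ) + 2 * ED.card) := h2
      _ = wv * VD.card + (2 * wv) * ED.card := by ring
      _ ≤ wv * VD.card + we * ED.card :=
          add_le_add (le_refl _) (mul_le_mul_of_nonneg_right hwe (by positivity))
  have h3 : wv * (VofD.card : ℝ) ≤ wv * (α * τ) := by
    calc wv * (VofD.card : ℝ) ≤ wv * VD.card + we * ED.card := h1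
      _ ≤ α * (wv * SVD.card + we * SED.card) := hDapx
      _ ≤ α * (wv * τ) := by
          apply mul_le_mul_of_nonneg_left hSτ (le_trans zero_le_one hα)
      _ = wv * (α * τ) := by ring
  exact le_of_mul_le_mul_left h3 hwv
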